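/- For every coupling γ ∈ Π(ρ₁,ρ₂), u ∈ L_exp^ε(ρ₁) and v ∈ L_exp^ε(ρ₂), one has ε KL(γ | K) ≥ D_ε(u,v) + ε, where K = e^{-c/ε} ρ₁⊗ρ₂; equality holds if and only if γ = e^{(u(x)+v(y)-c(x,y))/ε} ρ₁⊗ρ₂. -/

import Mathlib

open MeasureTheory Real
open scoped ENNReal NNReal

noncomputable section


lemma entLoss_aux {r : ℝ} (hr : 0 < r) :
    0 ≤ r * Real.log r - r + 1 ∧ (r * Real.log r - r + 1 = 0 ↔ r = 1) := by
  have hlog : Real.log r⁻¹ ≤ r⁻¹ - 1 := Real.log_le_sub_one_of_pos (by positivity)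
  rw [Real.log_inv] at hlog
  have h1 : r - 1 ≤ r * Real.log r := by
    have := mul_le_mul_of_nonneg_left hlog hr.le
    have h2 : r * -Real.log r ≤ r * (r⁻¹ - 1) := this
    rw [mul_sub, mul_inv_cancel₀ hr.ne'] at h2
    nlinarith
  constructor
  · linarith
  · constructor
    · intro h
      by_contra hne
      have hlt : Real.log r⁻¹ < r⁻¹ - 1 :=
        Real.log_lt_sub_one_of_pos (by positivity) (by
          simp only [ne_eq, inv_eq_one]; exact hne)
      rw [Real.log_inv] at hlt
      have := mul_lt_mul_of_pos_left hlt hr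
      rw [mul_sub, mul_inv_cancel₀ hr.ne'] at this
      nlinarith
    · rintro rfl; simp

lemma entLoss {ε t b : ℝ} (hε : 0 < ε) (ht : 0 ≤ t) :
    0 ≤ ε * (t * Real.log t) - t * b - ε * t + ε * Real.exp (b / ε) ∧
    (ε * (t * Real.log t) - t * b - ε * t + ε * Real.exp (b / ε) = 0 ↔ t = Real.exp (b / ε)) := by
  set w := Real.exp (b / ε) with hw
  have hwpos : 0 < w := Real.exp_pos _
  have hb : b = ε * Real.log w := by rw [hw, Real.log_exp]; field_simp
  rcases eq_or_lt_of_le ht with h0 | htpos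
  · have he : ε * (0 * Real.log 0) - 0 * b - ε * 0 + ε * w = ε * w := by ring
    constructor
    · rw [← h0, he]; positivity
    · rw [← h0, he]
      constructor
      · intro h; exfalso; nlinarith
      · intro h; exfalso; nlinarith
  · have hr : 0 < t / w := by positivity
    obtain ⟨haux1, haux2⟩ := entLoss_aux hr
    have key : ε * (t * Real.log t) - t * b - ε * t + ε * w
        = ε * w * ((t / w) * Real.log (t / w) - (t / w) + 1) := by
      rw [Real.log_div htpos.ne' hwpos.ne', hb]
      field_simp
    constructor
    · rw [key]; positivity
    · rw [key]
      constructor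
      · intro h
        have hεw : ε * w ≠ 0 := by positivity
        have : (t / w) * Real.log (t / w) - (t / w) + 1 = 0 := by
          rcases mul_eq_zero.mp h with h' | h'
          · exact absurd h' hεw
          · exact h'
        have := haux2.mp this
        field_simp at this
        linarith
      · intro h
        rw [h]
        rw [div_self hwpos.ne']
        simp


open Classical in
/-- Kullback–Leibler divergence, valued in `EReal` (`⊤` if `μ` is not absolutely
continuous w.r.t. `ν` or the log-density is not integrable). -/
def KL {Z : Type*} [MeasurableSpace Z] (μ ν : Measure Z) : EReal :=
  if μ ≪ ν ∧ Integrable (fun z => Real.log (μ.rnDeriv ν z).toReal) μ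
  then ((∫ z, Real.log (μ.rnDeriv ν z).toReal ∂μ : ℝ) : EReal) else ⊤

open Classical in
/-- The dual Entropy–Kantorovich functional, valued in `EReal` (equal to `⊥` when one of
the defining integrals is not finite). -/
def Dext {X Y : Type*} [MeasurableSpace X] [MeasurableSpace Y]
    (ρ₁ : Measure X) (ρ₂ : Measure Y) (c : X → Y → ℝ) (ε : ℝ)
    (u : X → ℝ) (v : Y → ℝ) : EReal :=
  if Integrable u ρ₁ ∧ Integrable v ρ₂ ∧
      Integrable (fun p : X × Y => Real.exp ((u p.1 + v p.2 - c p.1 p.2) / ε)) (ρ₁.prod ρ₂)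
  then (((∫ x, u x ∂ρ₁) + (∫ y, v y ∂ρ₂)
    - ε * ∫ p, Real.exp ((u p.1 + v p.2 - c p.1 p.2) / ε) ∂(ρ₁.prod ρ₂) : ℝ) : EReal)
  else ⊥

set_option maxHeartbeats 1000000 in
theorem KL_ge_dual_with_equality_iff
    {X Y : Type*}
    [MeasurableSpace X] [TopologicalSpace X] [PolishSpace X] [BorelSpace X]
    [MeasurableSpace Y] [TopologicalSpace Y] [PolishSpace Y] [BorelSpace Y]
    (ρ₁ : Measure X) [IsProbabilityMeasure ρ₁]
    (ρ₂ : Measure Y) [IsProbabilityMeasure ρ₂]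
    (ε : ℝ) (hε : 0 < ε)
    (c : X → Y → ℝ) (hc : Measurable (Function.uncurry c))
    (γ : Measure (X × Y)) [IsProbabilityMeasure γ]
    (hγ₁ : γ.map Prod.fst = ρ₁) (hγ₂ : γ.map Prod.snd = ρ₂)
    (u : X → ℝ) (hu : Measurable u) (hu1 : Integrable u ρ₁)
    (huexp : Integrable (fun x => Real.exp (u x / ε)) ρ₁)
    (hupos : 0 < ∫ x, Real.exp (u x / ε) ∂ρ₁)
    (v : Y → ℝ) (hv : Measurable v) (hv1 : Integrable v ρ₂)
    (hvexp : Integrable (fun y => Real.exp (v y / ε)) ρ₂)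
    (hvpos : 0 < ∫ y, Real.exp (v y / ε) ∂ρ₂) :
    Dext ρ₁ ρ₂ c ε u v + (ε : EReal) ≤
      (ε : EReal) * KL γ ((ρ₁.prod ρ₂).withDensity
        (fun p => ENNReal.ofReal (Real.exp (-c p.1 p.2 / ε)))) ∧
    ((ε : EReal) * KL γ ((ρ₁.prod ρ₂).withDensity
        (fun p => ENNReal.ofReal (Real.exp (-c p.1 p.2 / ε))))
       = Dext ρ₁ ρ₂ c ε u v + (ε : EReal)
      ↔ γ = (ρ₁.prod ρ₂).withDensity
          (fun p => ENNReal.ofReal (Real.exp ((u p.1 + v p.2 - c p.1 p.2) / ε)))) := by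
  classical
  set ν : Measure (X × Y) := ρ₁.prod ρ₂ with hν
  set w : X × Y → ℝ := fun p => Real.exp ((u p.1 + v p.2 - c p.1 p.2) / ε) with hwdef
  set K : Measure (X × Y) := ν.withDensity (fun p => ENNReal.ofReal (Real.exp (-c p.1 p.2 / ε)))
    with hK
  set μ : Measure (X × Y) := ν.withDensity (fun p => ENNReal.ofReal (w p)) with hμ
  -- measurability facts
  have hcm : Measurable (fun p : X × Y => c p.1 p.2) := hc
  have hwm : Measurable w := by
    apply Real.measurable_exp.comp
    exact ((((hu.comp measurable_fst).add (hv.comp measurable_snd)).sub hcm).div_const ε)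
  have hhm : Measurable (fun p : X × Y => ENNReal.ofReal (Real.exp (-c p.1 p.2 / ε))) :=
    ENNReal.measurable_ofReal.comp (Real.measurable_exp.comp ((hcm.neg).div_const ε))
  have hKν : K ≪ ν := withDensity_absolutelyContinuous _ _
  -- marginal integrability
  have hufst : Integrable (fun p : X × Y => u p.1) γ := by
    have := (integrable_map_measure (f := Prod.fst) (g := u)
      (by rw [hγ₁]; exact hu1.1) measurable_fst.aemeasurable).mp (by rwa [hγ₁])
    exact this
  have hvsnd : Integrable (fun p : X × Y => v p.2) γ := by
    have := (integrable_map_measure (f := Prod.snd) (g := v)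
      (by rw [hγ₂]; exact hv1.1) measurable_snd.aemeasurable).mp (by rwa [hγ₂])
    exact this
  have hufst_int : ∫ p, u p.1 ∂γ = ∫ x, u x ∂ρ₁ := by
    rw [← hγ₁, integral_map measurable_fst.aemeasurable (by rw [hγ₁]; exact hu1.1)]
  have hvsnd_int : ∫ p, v p.2 ∂γ = ∫ y, v y ∂ρ₂ := by
    rw [← hγ₂, integral_map measurable_snd.aemeasurable (by rw [hγ₂]; exact hv1.1)]
  -- if γ equals μ then the KL conditions hold and w is integrable
  have hμ_of_eq : γ = μ → (γ ≪ K ∧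
      Integrable (fun z => Real.log (γ.rnDeriv K z).toReal) γ) ∧ Integrable w ν := by
    intro hγμ
    set g : X × Y → ℝ≥0∞ := fun p => ENNReal.ofReal (Real.exp ((u p.1 + v p.2) / ε)) with hgdef
    have hgm : Measurable g :=
      ENNReal.measurable_ofReal.comp (Real.measurable_exp.comp
        (((hu.comp measurable_fst).add (hv.comp measurable_snd)).div_const ε))
    have hfactor : ∀ p : X × Y, ENNReal.ofReal (w p)
        = ENNReal.ofReal (Real.exp (-c p.1 p.2 / ε)) * g p := by
      intro p
      have harg : (u p.1 + v p.2 - c p.1 p.2) / ε = -c p.1 p.2 / ε + (u p.1 + v p.2) / ε := by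
        ring
      simp only [hwdef, hgdef, harg, Real.exp_add]
      rw [ENNReal.ofReal_mul (Real.exp_nonneg _)]
    have hμK : μ = K.withDensity g := by
      rw [hμ, hK, ← withDensity_mul ν hhm hgm]
      congr 1
      ext p
      exact hfactor p
    have hacK : γ ≪ K := by
      rw [hγμ, hμK]
      exact withDensity_absolutelyContinuous _ _
    have hrn : μ.rnDeriv K =ᵐ[K] g := by
      rw [hμK]
      exact Measure.rnDeriv_withDensity K hgm
    have hlog : (fun z => Real.log (γ.rnDeriv K z).toReal)
        =ᵐ[γ] fun p => (u p.1 + v p.2) / ε := by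
      rw [hγμ]
      filter_upwards [(hμK ▸ withDensity_absolutelyContinuous K g :
        μ ≪ K).ae_le (hγμ ▸ hrn : γ.rnDeriv K =ᵐ[K] g)] with p hp
      rw [← hγμ, hp, hgdef, ENNReal.toReal_ofReal (Real.exp_nonneg _), Real.log_exp]
    have hintlog : Integrable (fun z => Real.log (γ.rnDeriv K z).toReal) γ :=
      ((hufst.add hvsnd).div_const ε).congr hlog.symm
    have hwint : Integrable w ν := by
      have h1 : ∫⁻ p, ENNReal.ofReal (w p) ∂ν = 1 := by
        have : μ Set.univ = 1 := by rw [← hγμ]; exact measure_univ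
        rwa [hμ, withDensity_apply _ MeasurableSet.univ, setLIntegral_univ] at this
      refine ⟨hwm.aestronglyMeasurable, ?_⟩
      rw [HasFiniteIntegral]
      have : (fun p => ‖w p‖ₑ) = fun p => ENNReal.ofReal (w p) := by
        ext p
        exact Real.enorm_eq_ofReal (Real.exp_nonneg _)
      rw [this, h1]
      exact ENNReal.one_lt_top
    exact ⟨⟨hacK, hintlog⟩, hwint⟩
  by_cases hKL : γ ≪ K ∧ Integrable (fun z => Real.log (γ.rnDeriv K z).toReal) γ
  · obtain ⟨hac, hint⟩ := hKL
    have hγν : γ ≪ ν := hac.trans hKν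
    set f : X × Y → ℝ := fun p => (γ.rnDeriv ν p).toReal with hfdef
    set ψ : X × Y → ℝ := fun z => Real.log (γ.rnDeriv K z).toReal with hψdef
    have hKLval : KL γ K = ((∫ z, ψ z ∂γ : ℝ) : EReal) := by rw [KL, if_pos ⟨hac, hint⟩]
    have hne0 : ∀ᵐ p ∂ν, (ENNReal.ofReal (Real.exp (-c p.1 p.2 / ε))) ≠ 0 :=
      ae_of_all _ fun p => by
        simp [ENNReal.ofReal_eq_zero, not_le, Real.exp_pos]
    have hnetop : ∀ᵐ p ∂ν, (ENNReal.ofReal (Real.exp (-c p.1 p.2 / ε))) ≠ ∞ :=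
      ae_of_all _ fun p => ENNReal.ofReal_ne_top
    have hrnK : γ.rnDeriv K =ᵐ[ν]
        fun p => (ENNReal.ofReal (Real.exp (-c p.1 p.2 / ε)))⁻¹ * γ.rnDeriv ν p := by
      rw [hK]
      exact Measure.rnDeriv_withDensity_right γ ν hhm.aemeasurable hne0 hnetop
    have hlt : ∀ᵐ p ∂ν, γ.rnDeriv ν p < ∞ := Measure.rnDeriv_lt_top γ ν
    have htoReal : ∀ᵐ p ∂ν, (γ.rnDeriv K p).toReal = Real.exp (c p.1 p.2 / ε) * f p := by
      filter_upwards [hrnK, hlt] with p hp hp2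
      have hinv : (ENNReal.ofReal (Real.exp (-c p.1 p.2 / ε)))⁻¹
          = ENNReal.ofReal (Real.exp (c p.1 p.2 / ε)) := by
        rw [← ENNReal.ofReal_inv_of_pos (Real.exp_pos _)]
        congr 1
        rw [neg_div, Real.exp_neg, inv_inv]
      rw [hp, hinv, ENNReal.toReal_mul, ENNReal.toReal_ofReal (Real.exp_nonneg _)]
    set E : X × Y → ℝ :=
      fun p => f p * (ε * ψ p) - f p * (u p.1 + v p.2 + ε) + ε * w p with hEdef
    have hEform : ∀ᵐ p ∂ν, E p = ε * (f p * Real.log (f p))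
        - f p * (u p.1 + v p.2 - c p.1 p.2) - ε * f p + ε * w p := by
      filter_upwards [htoReal] with p hp
      have hf0 : (0:ℝ) ≤ f p := ENNReal.toReal_nonneg
      rcases eq_or_lt_of_le hf0 with h0 | hpos
      · simp only [hEdef]
        rw [← h0]
        ring
      · have hψp : ψ p = c p.1 p.2 / ε + Real.log (f p) := by
          simp only [hψdef]
          rw [hp, Real.log_mul (Real.exp_ne_zero _) (ne_of_gt hpos), Real.log_exp]
        simp only [hEdef]
        rw [hψp]
        field_simp
        ring
    have hEnn : 0 ≤ᵐ[ν] E := by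
      filter_upwards [hEform] with p hp
      rw [Pi.zero_apply, hp]
      simp only [hwdef]
      exact (entLoss hε ENNReal.toReal_nonneg).1
    have hEiff : ∀ᵐ p ∂ν, (E p = 0 ↔ f p = w p) := by
      filter_upwards [hEform] with p hp
      rw [hp]
      simp only [hwdef]
      exact (entLoss hε ENNReal.toReal_nonneg).2
    have hsm : ∀ (g : X × Y → ℝ), Integrable g γ → Integrable (fun p => f p * g p) ν := by
      intro g hg
      have := (integrable_rnDeriv_smul_iff (f := g) hγν).mpr hg
      simpa [smul_eq_mul] using this
    have hsint : ∀ (g : X × Y → ℝ), ∫ p, f p * g p ∂ν = ∫ p, g p ∂γ := by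
      intro g
      have := integral_rnDeriv_smul (f := g) hγν
      simpa [smul_eq_mul] using this
    have hA : Integrable (fun p => f p * (ε * ψ p)) ν := hsm _ (hint.const_mul ε)
    have hB : Integrable (fun p => f p * (u p.1 + v p.2 + ε)) ν :=
      hsm _ ((hufst.add hvsnd).add (integrable_const ε))
    have IA : ∫ p, f p * (ε * ψ p) ∂ν = ε * ∫ z, ψ z ∂γ := by
      rw [hsint _, integral_const_mul]
    have IB : ∫ p, f p * (u p.1 + v p.2 + ε) ∂ν = (∫ x, u x ∂ρ₁) + (∫ y, v y ∂ρ₂) + ε := by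
      rw [hsint _]
      have h1 := integral_add (hufst.add hvsnd) (integrable_const (ε:ℝ))
      simp only [Pi.add_apply] at h1
      rw [h1, integral_add hufst hvsnd, hufst_int, hvsnd_int, integral_const]
      simp [measure_univ]
    by_cases hwi : Integrable w ν
    · have hC : Integrable (fun p => ε * w p) ν := hwi.const_mul ε
      have hE_int : Integrable E ν := by
        rw [hEdef]
        exact (hA.sub hB).add hC
      have hm : ∫ p, E p ∂ν = ε * (∫ z, ψ z ∂γ)
          - ((∫ x, u x ∂ρ₁) + (∫ y, v y ∂ρ₂) + ε) + ε * ∫ p, w p ∂ν := by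
        rw [hEdef]
        have h1 := integral_add (hA.sub hB) hC
        simp only [Pi.sub_apply] at h1
        rw [h1, integral_sub hA hB, IA, IB, integral_const_mul]
      have hEpos : 0 ≤ ∫ p, E p ∂ν := integral_nonneg_of_ae hEnn
      have hcond : Integrable u ρ₁ ∧ Integrable v ρ₂ ∧
          Integrable (fun p : X × Y => Real.exp ((u p.1 + v p.2 - c p.1 p.2) / ε))
            (ρ₁.prod ρ₂) := ⟨hu1, hv1, hwi⟩
      have hDval : Dext ρ₁ ρ₂ c ε u v = (((∫ x, u x ∂ρ₁) + (∫ y, v y ∂ρ₂)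
          - ε * ∫ p, w p ∂ν : ℝ) : EReal) := by
        rw [Dext, if_pos hcond]
      have key : f =ᵐ[ν] w ↔ γ = μ := by
        constructor
        · intro h
          have hrn_eq : γ.rnDeriv ν =ᵐ[ν] fun p => ENNReal.ofReal (w p) := by
            filter_upwards [h, hlt] with p hp hp2
            rw [← hp]
            exact (ENNReal.ofReal_toReal hp2.ne).symm
          calc γ = ν.withDensity (γ.rnDeriv ν) :=
                (Measure.withDensity_rnDeriv_eq γ ν hγν).symm
            _ = μ := by rw [hμ]; exact withDensity_congr_ae hrn_eq
        · intro h
          have hwm' : Measurable (fun p => ENNReal.ofReal (w p)) :=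
            ENNReal.measurable_ofReal.comp hwm
          have hrd : γ.rnDeriv ν =ᵐ[ν] fun p => ENNReal.ofReal (w p) := by
            rw [h, hμ]
            exact Measure.rnDeriv_withDensity ν hwm'
          filter_upwards [hrd] with p hp
          simp only [hfdef]
          rw [hp, ENNReal.toReal_ofReal]
          exact Real.exp_nonneg _
        -- end key
      have hEzero_iff : (∫ p, E p ∂ν = 0) ↔ E =ᵐ[ν] 0 :=
        integral_eq_zero_iff_of_nonneg_ae hEnn hE_int
      have hEae_iff : (E =ᵐ[ν] 0) ↔ f =ᵐ[ν] w := by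
        constructor
        · intro h
          filter_upwards [hEiff, h] with p hp hp2
          exact hp.mp hp2
        · intro h
          filter_upwards [hEiff, h] with p hp hp2
          exact hp.mpr hp2
      constructor
      · rw [hDval, hKLval, ← EReal.coe_mul, ← EReal.coe_add, EReal.coe_le_coe_iff]
        linarith [hm ▸ hEpos]
      · rw [hDval, hKLval, ← EReal.coe_mul, ← EReal.coe_add, EReal.coe_eq_coe_iff]
        rw [← key, ← hEae_iff, ← hEzero_iff]
        constructor
        · intro h
          rw [hm]
          linarith
        · intro h
          have := hm ▸ h
          linarith
    · have hDbot : Dext ρ₁ ρ₂ c ε u v = ⊥ := by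
        rw [Dext, if_neg]
        rintro ⟨-, -, h3⟩
        exact hwi h3
      constructor
      · rw [hDbot, EReal.bot_add]
        exact bot_le
      · rw [hDbot, EReal.bot_add, hKLval, ← EReal.coe_mul]
        constructor
        · intro h
          exact absurd h (EReal.coe_ne_bot _)
        · intro h
          exact absurd ((hμ_of_eq h).2) hwi
  · -- KL = ⊤
    have hKLtop : KL γ K = ⊤ := by rw [KL, if_neg hKL]
    have htop : (ε : EReal) * KL γ K = ⊤ := by
      rw [hKLtop]
      exact EReal.coe_mul_top_of_pos hε
    have hne : Dext ρ₁ ρ₂ c ε u v + (ε : EReal) ≠ ⊤ := by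
      rw [Dext]
      split_ifs
      · rw [← EReal.coe_add]; exact EReal.coe_ne_top _
      · rw [EReal.bot_add]; exact bot_ne_top
    refine ⟨htop ▸ le_top, ?_⟩
    rw [htop]
    constructor
    · intro h; exact absurd h.symm hne
    · intro h
      exact absurd ((hμ_of_eq h).1) hKL

end
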